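/- Fix real numbers 0 < α < β² < β < 1 and let n be sufficiently large. Let M be an n-vertex standard multigraph (loopless, edge multiplicities at most 2) with e(M) ≥ (d − α)n², and suppose every induced submultigraph M' of M on m ≥ (1−β)n vertices satisfies e(M') ≤ d·m². Then there exists an induced submultigraph M₀' of M on m ≥ (1−β)n vertices with minimum degree δ(M₀') ≥ 2(d − β)m. -/
import Mathlib


open Finset

/-- A standard multigraph: loop-free, with every pair of vertices joined by
at most two parallel edges (`μ` is the symmetric multiplicity function). -/
structure StdMultigraph (V : Type*) where
  μ : V → V → ℕ
  symm : ∀ u v, μ u v = μ v u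
  loopless : ∀ v, μ v v = 0
  le_two : ∀ u v, μ u v ≤ 2

set_option maxHeartbeats 2000000 in
/-- (Here `∑ u ∑ v, μ u v = 2 e(M)`, so the hypotheses and conclusion
are the doubled versions of `e(M) ≥ (d-α)n²`, `e(M') ≤ d m²`, and `δ ≥ 2(d-β)m`.)
If `e(M) ≥ (d-α)n²` while every induced submultigraph on at least `(1-β)n` vertices has
edge density at most `d`, then some induced submultigraph on at least `(1-β)n` vertices
has minimum degree at least `2(d-β)` times its order. -/
theorem stmt_4 :
    ∀ (α β : ℝ), 0 < α → α < β ^ 2 → β ^ 2 < β → β < 1 →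
    ∃ n₀ : ℕ, ∀ (d : ℝ) (n : ℕ), n₀ ≤ n →
    ∀ (V : Type) (_ : Fintype V) (_ : DecidableEq V) (M : StdMultigraph V),
      Fintype.card V = n →
      2 * (d - α) * (n : ℝ) ^ 2 ≤ ∑ u : V, ∑ v : V, (M.μ u v : ℝ) →
      (∀ A : Finset V, (1 - β) * (n : ℝ) ≤ A.card →
        ∑ u ∈ A, ∑ v ∈ A, (M.μ u v : ℝ) ≤ 2 * d * (A.card : ℝ) ^ 2) →
      ∃ A : Finset V, (1 - β) * (n : ℝ) ≤ A.card ∧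
        ∀ v ∈ A, 2 * (d - β) * (A.card : ℝ) ≤ ∑ u ∈ A, (M.μ v u : ℝ) := by
  intro α β hα hαβ hβ2 hβ1
  have hβ0 : 0 < β := by nlinarith
  have hc : 0 < β ^ 2 * (1 - β) := by nlinarith
  obtain ⟨n₀, hn₀⟩ := exists_nat_gt (4 / (β ^ 2 * (1 - β)))
  refine ⟨n₀ + 1, ?_⟩
  intro d n hn V _ _ M hcard hE hdens
  have hn1 : 1 ≤ n := le_trans (Nat.le_add_left 1 n₀) hn
  have hnR : (1 : ℝ) ≤ (n : ℝ) := by exact_mod_cast hn1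
  have hnbig : 4 < β ^ 2 * (1 - β) * n := by
    have h1 : (n₀ : ℝ) < n := by exact_mod_cast Nat.lt_of_lt_of_le (Nat.lt_succ_self n₀) hn
    have h2 : 4 / (β ^ 2 * (1 - β)) < (n : ℝ) := lt_trans hn₀ h1
    rw [div_lt_iff₀ hc] at h2
    linarith [h2]
  -- upper bound on d
  have hEub : ∑ u : V, ∑ v : V, (M.μ u v : ℝ) ≤ 2 * (n : ℝ) ^ 2 := by
    calc ∑ u : V, ∑ v : V, (M.μ u v : ℝ) ≤ ∑ _u : V, ∑ _v : V, (2 : ℝ) := by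
          apply Finset.sum_le_sum
          intro u _
          apply Finset.sum_le_sum
          intro v _
          exact_mod_cast M.le_two u v
      _ = 2 * (n : ℝ) ^ 2 := by
          simp [Finset.card_univ, hcard]
          ring
  have hd_ub : d ≤ 1 + α := by
    nlinarith [hE, hEub, hnR, sq_nonneg ((n : ℝ) - 1)]
  -- main strong induction
  have key : ∀ A : Finset V, (1 - β) * (n : ℝ) ≤ (A.card : ℝ) →
      2 * (d - α) * (n : ℝ) ^ 2
        - 2 * (d - β) * ((n : ℝ) * ((n : ℝ) + 1) - (A.card : ℝ) * ((A.card : ℝ) + 1))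
        ≤ ∑ u ∈ A, ∑ v ∈ A, (M.μ u v : ℝ) →
      ∃ B : Finset V, (1 - β) * (n : ℝ) ≤ (B.card : ℝ) ∧
        ∀ v ∈ B, 2 * (d - β) * (B.card : ℝ) ≤ ∑ u ∈ B, (M.μ v u : ℝ) := by
    intro A
    induction A using Finset.strongInduction with
    | _ A ih =>
      intro hA1 hA2
      by_cases hgood : ∀ v ∈ A, 2 * (d - β) * (A.card : ℝ) ≤ ∑ u ∈ A, (M.μ v u : ℝ)
      · exact ⟨A, hA1, hgood⟩
      · push_neg at hgood
        obtain ⟨v, hv, hdeg⟩ := hgood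
        have hdegnn : (0 : ℝ) ≤ ∑ u ∈ A, (M.μ v u : ℝ) :=
          Finset.sum_nonneg fun u _ => by positivity
        have hm0 : (0 : ℝ) < (A.card : ℝ) := by
          have : 0 < A.card := Finset.card_pos.2 ⟨v, hv⟩
          exact_mod_cast this
        have hdβ : β < d := by
          by_contra h
          push_neg at h
          nlinarith [mul_nonneg (sub_nonneg.2 h) hm0.le]
        have hsub : A.erase v ⊂ A := Finset.erase_ssubset hv
        have hcard' : ((A.erase v).card : ℝ) = (A.card : ℝ) - 1 := by
          rw [Finset.card_erase_of_mem hv]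
          have : 1 ≤ A.card := Finset.card_pos.2 ⟨v, hv⟩
          push_cast [Nat.cast_sub this]
          ring
        -- edge count after erasing
        have hE' : ∑ u ∈ A.erase v, ∑ w ∈ A.erase v, (M.μ u w : ℝ)
            = (∑ u ∈ A, ∑ w ∈ A, (M.μ u w : ℝ)) - 2 * ∑ u ∈ A, (M.μ v u : ℝ) := by
          have hrow : ∀ u : V, ∑ w ∈ A.erase v, (M.μ u w : ℝ)
              = ∑ w ∈ A, (M.μ u w : ℝ) - (M.μ u v : ℝ) := fun u =>
            Finset.sum_erase_eq_sub hv
          calc ∑ u ∈ A.erase v, ∑ w ∈ A.erase v, (M.μ u w : ℝ)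
              = ∑ u ∈ A.erase v, (∑ w ∈ A, (M.μ u w : ℝ) - (M.μ u v : ℝ)) := by
                exact Finset.sum_congr rfl fun u _ => hrow u
            _ = (∑ u ∈ A, (∑ w ∈ A, (M.μ u w : ℝ) - (M.μ u v : ℝ)))
                - (∑ w ∈ A, (M.μ v w : ℝ) - (M.μ v v : ℝ)) :=
                Finset.sum_erase_eq_sub hv
            _ = (∑ u ∈ A, ∑ w ∈ A, (M.μ u w : ℝ)) - 2 * ∑ u ∈ A, (M.μ v u : ℝ) := by
                rw [Finset.sum_sub_distrib]
                have hsymm : ∑ u ∈ A, (M.μ u v : ℝ) = ∑ u ∈ A, (M.μ v u : ℝ) :=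
                  Finset.sum_congr rfl fun u _ => by rw [M.symm]
                rw [hsymm, M.loopless]
                push_cast
                ring
        by_cases hsize : (1 - β) * (n : ℝ) ≤ (A.card : ℝ) - 1
        · -- recurse
          have h1 : (1 - β) * (n : ℝ) ≤ ((A.erase v).card : ℝ) := by rw [hcard']; exact hsize
          have h2 : 2 * (d - α) * (n : ℝ) ^ 2
              - 2 * (d - β) * ((n : ℝ) * ((n : ℝ) + 1)
                - ((A.erase v).card : ℝ) * (((A.erase v).card : ℝ) + 1))
              ≤ ∑ u ∈ A.erase v, ∑ w ∈ A.erase v, (M.μ u w : ℝ) := by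
            rw [hcard', hE']
            nlinarith [hA2, hdeg, hm0]
          exact ih (A.erase v) hsub h1 h2
        · -- contradiction with the density hypothesis
          exfalso
          push_neg at hsize
          have hdensA := hdens A hA1
          have hmn : (A.card : ℝ) ≤ (n : ℝ) := by
            have : A.card ≤ Fintype.card V := Finset.card_le_univ A
            rw [hcard] at this
            exact_mod_cast this
          set m : ℝ := (A.card : ℝ) with hm
          -- f(m) ≤ 2 d m²
          have h6 : 2 * (d - α) * (n : ℝ) ^ 2
              - 2 * (d - β) * ((n : ℝ) * ((n : ℝ) + 1) - m * (m + 1)) ≤ 2 * d * m ^ 2 :=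
            le_trans hA2 hdensA
          have e1 : (d - β) * ((n : ℝ) - m) ≤ (n : ℝ) - m := by
            nlinarith [hmn, hd_ub]
          have e2 : (n : ℝ) - m ≤ β * n := by nlinarith [hA1]
          have hmu : m ≤ (1 - β) * n + 1 := by linarith
          have e3 : β * m ^ 2 ≤ β * ((1 - β) * n + 1) ^ 2 := by
            have h := mul_le_mul hmu hmu hm0.le (by linarith : (0:ℝ) ≤ (1 - β) * n + 1)
            nlinarith [h]
          have e5 : 2 * (β - α) * (n : ℝ) ^ 2 ≤ 2 * β * m ^ 2 + 2 * (d - β) * ((n : ℝ) - m) := by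
            nlinarith [h6]
          have e6 : 4 * (n : ℝ) < β ^ 2 * (1 - β) * (n : ℝ) ^ 2 := by
            nlinarith [hnbig, hnR]
          have e7 : 0 < (β ^ 2 - α) * (n : ℝ) ^ 2 := by
            have : (0:ℝ) < (n:ℝ)^2 := by positivity
            nlinarith [this]
          have e8 : 0 ≤ (1 - β) * (n : ℝ) := by nlinarith [hnR]
          have e9 : 0 ≤ β ^ 2 * (n : ℝ) := by positivity
          nlinarith [e1, e2, e3, e5, e6, e7, e8, e9, hnR, hβ0, hβ1]
  -- apply to univ
  have hu1 : (1 - β) * (n : ℝ) ≤ ((Finset.univ : Finset V).card : ℝ) := by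
    rw [Finset.card_univ, hcard]
    nlinarith [hnR]
  have hu2 : 2 * (d - α) * (n : ℝ) ^ 2
      - 2 * (d - β) * ((n : ℝ) * ((n : ℝ) + 1)
        - (((Finset.univ : Finset V).card : ℝ)) * ((((Finset.univ : Finset V).card : ℝ)) + 1))
      ≤ ∑ u ∈ (Finset.univ : Finset V), ∑ v ∈ (Finset.univ : Finset V), (M.μ u v : ℝ) := by
    rw [Finset.card_univ, hcard]
    simpa using hE
  exact key Finset.univ hu1 hu2
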